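/- For a prime power q, the set of prime divisors of q^2 - 1 has cardinality at most 2 if and only if q ∈ {2, 3, 4, 5, 7, 8, 9, 17}. -/

import Mathlib

section Aux

lemma odd_dvd_two_pow' {d n : ℕ} (hd : Odd d) (h : d ∣ 2 ^ n) : d = 1 :=
  Nat.Coprime.eq_one_of_dvd ((Nat.coprime_two_right.mpr hd).pow_right n) h

lemma two_pow_add_two' {a b : ℕ} (h : 2 ^ b = 2 ^ a + 2) : a = 1 ∧ b = 2 := by
  have h1a : 1 ≤ 2 ^ a := Nat.one_le_two_pow
  have hb2 : 2 ≤ b := by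
    by_contra hb
    interval_cases b <;> omega
  have h2 : (4:ℕ) ∣ 2 ^ b := by
    have : (2:ℕ)^2 ∣ 2 ^ b := pow_dvd_pow 2 hb2
    simpa using this
  have ha : a ≤ 1 := by
    by_contra hc
    push_neg at hc
    have h1 : (4:ℕ) ∣ 2 ^ a := by
      have : (2:ℕ)^2 ∣ 2 ^ a := pow_dvd_pow 2 hc
      simpa using this
    omega
  interval_cases a
  · have : (2:ℕ) ∣ 3 := by
      have := dvd_pow_self 2 (by omega : b ≠ 0)
      omega
    norm_num at this
  · have hb : 2 ^ b = 2 ^ 2 := by omega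
    exact ⟨rfl, Nat.pow_right_injective (le_refl 2) hb⟩

lemma odd_exp_add' {p e m : ℕ} (hp : 2 ≤ p) (hpo : Odd p) (he : Odd e)
    (h : p ^ e + 1 = 2 ^ m) : e = 1 := by
  have key := geom_sum₂_mul (p : ℤ) (-1) e
  rw [he.neg_pow, sub_neg_eq_add, sub_neg_eq_add, one_pow] at key
  set S : ℤ := ∑ i ∈ Finset.range e, (p:ℤ) ^ i * (-1) ^ (e - 1 - i) with hS
  have hcast : ((S : ℤ) : ZMod 2) = 1 := by
    obtain ⟨t, ht⟩ := hpo
    obtain ⟨s, hs⟩ := he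
    rw [hS]
    push_cast
    have hneg : (-1 : ZMod 2) = 1 := by decide
    have hone : ((p:ℕ) : ZMod 2) = 1 := by
      rw [ht]; push_cast; ring_nf
      rw [show (2:ZMod 2) = 0 by decide, mul_zero, add_zero]
    push_cast at hone
    rw [Finset.sum_congr rfl fun i _ => by rw [hneg, hone, one_pow, one_pow, one_mul]]
    simp [hs]
    exact Or.inl (by decide)
  have hSodd : Odd S := by
    rw [← Int.not_even_iff_odd]
    intro hev
    rw [(ZMod.intCast_zmod_eq_zero_iff_dvd S 2).mpr (by exact_mod_cast hev.two_dvd)] at hcast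
    exact zero_ne_one hcast
  have hZ : ((p:ℤ)) ^ e + 1 = 2 ^ m := by exact_mod_cast h
  have hSdvd : S.natAbs ∣ 2 ^ m := by
    have hd : S ∣ (2:ℤ) ^ m := ⟨(p:ℤ) + 1, by rw [← hZ, ← key]⟩
    have h3 := Int.natAbs_dvd_natAbs.mpr hd
    rwa [Int.natAbs_pow, show ((2:ℤ)).natAbs = 2 from rfl] at h3
  have h1 := odd_dvd_two_pow' (Int.natAbs_odd.mpr hSodd) hSdvd
  rcases Int.natAbs_eq_iff.mp h1 with h2 | h2 <;> simp only [Nat.cast_one] at h2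
  · rw [h2, one_mul] at key
    have hN : p ^ e = p ^ 1 := by
      have : ((p:ℤ)) ^ e = (p:ℤ) ^ 1 := by rw [pow_one]; linarith
      exact_mod_cast this
    exact Nat.pow_right_injective hp hN
  · rw [h2] at key
    have hpos : (0:ℤ) < (p:ℤ) ^ e := by positivity
    have hge : (0:ℤ) ≤ (p:ℤ) := by positivity
    nlinarith

lemma odd_exp_sub' {p e k : ℕ} (hp : 2 ≤ p) (hpo : Odd p) (he : Odd e)
    (h : p ^ e - 1 = 2 ^ k) : e = 1 := by
  by_contra hne
  have he3 : 3 ≤ e := by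
    rcases he with ⟨s, hs⟩; omega
  set T : ℕ := ∑ i ∈ Finset.range e, p ^ i with hT
  have key : T * (p - 1) = p ^ e - 1 := geom_sum_mul_of_one_le (by omega) e
  have hdvd : T ∣ 2 ^ k := ⟨p - 1, by rw [← h, key]⟩
  have hcast : ((T : ℕ) : ZMod 2) = 1 := by
    obtain ⟨t, ht⟩ := hpo
    obtain ⟨s, hs⟩ := he
    rw [hT]
    push_cast
    have hone : ((p:ℕ) : ZMod 2) = 1 := by
      rw [ht]; push_cast; ring_nf
      rw [show (2:ZMod 2) = 0 by decide, mul_zero, add_zero]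
    push_cast at hone
    rw [Finset.sum_congr rfl fun i _ => by rw [hone, one_pow]]
    simp [hs]
    exact Or.inl (by decide)
  have hTodd : Odd T := by
    rw [Nat.odd_iff, ← Nat.not_even_iff]
    intro hev
    rw [(ZMod.natCast_eq_zero_iff T 2).mpr hev.two_dvd] at hcast
    exact zero_ne_one hcast
  have hT1 := odd_dvd_two_pow' hTodd hdvd
  have hge : 1 + p ≤ T := by
    have hsub : ({0, 1} : Finset ℕ) ⊆ Finset.range e := by
      intro x hx; simp at hx; rcases hx with rfl | rfl <;> simp <;> omega
    calc 1 + p = ∑ i ∈ ({0,1} : Finset ℕ), p ^ i := by simp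
    _ ≤ T := Finset.sum_le_sum_of_subset hsub
  omega

lemma odd_sq_mod_eight' {x : ℕ} (hx : Odd x) : x ^ 2 % 8 = 1 := by
  obtain ⟨t, rfl⟩ := hx
  obtain ⟨u, hu⟩ := Nat.even_mul_succ_self t
  have : (2*t+1)^2 = 8 * u + 1 := by ring_nf; nlinarith [sq_nonneg t]
  omega

lemma mersenne_primePow' {m : ℕ} (hm : 2 ≤ m) (h : IsPrimePow (2 ^ m - 1)) : m.Prime := by
  obtain ⟨p, e, hp, he, hpe⟩ := (isPrimePow_nat_iff _).mp h
  have h2m : 4 ≤ 2 ^ m := by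
    calc (4:ℕ) = 2^2 := rfl
    _ ≤ 2^m := Nat.pow_le_pow_right (by norm_num) hm
  have hodd : Odd (2 ^ m - 1) :=
    Nat.Even.sub_odd (by omega) (Nat.even_pow.mpr ⟨even_two, by omega⟩) odd_one
  have hpodd : Odd p := by
    rcases hp.eq_two_or_odd' with rfl | h2
    · exfalso
      have : (2:ℕ) ∣ 2 ^ m - 1 := hpe ▸ dvd_pow_self 2 he.ne'
      rw [Nat.odd_iff] at hodd
      omega
    · exact h2
  have hsum : p ^ e + 1 = 2 ^ m := by omega
  have hp3 : 3 ≤ p :=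
    hp.two_le.lt_of_ne (by rintro rfl; exact (Nat.not_odd_iff_even.mpr even_two) hpodd)
  rcases Nat.even_or_odd e with hee | hee
  · exfalso
    obtain ⟨f, hf⟩ := hee
    have hff : e = 2 * f := by omega
    subst hff
    have hf1 : 1 ≤ f := by omega
    have h8 : (p ^ f) ^ 2 % 8 = 1 := odd_sq_mod_eight' (hpodd.pow)
    rw [← pow_mul, mul_comm f 2] at h8
    have h9 : 3 ^ 2 ≤ p ^ (2 * f) := by
      calc (3:ℕ)^2 ≤ p^2 := Nat.pow_le_pow_left hp3 2
      _ ≤ p ^ (2*f) := Nat.pow_le_pow_right (by omega) (by omega)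
    have hm3 : 3 ≤ m := by
      by_contra hc
      push_neg at hc
      have : 2 ^ m ≤ 2 ^ 2 := Nat.pow_le_pow_right (by norm_num) (by omega)
      norm_num at this h9
      omega
    have hdvd8 : (8:ℕ) ∣ 2 ^ m := by
      calc (8:ℕ) = 2^3 := rfl
      _ ∣ 2^m := pow_dvd_pow 2 hm3
    omega
  · have he1 := odd_exp_add' hp.two_le hpodd hee hsum
    subst he1
    rw [pow_one] at hpe
    exact (Nat.prime_of_pow_sub_one_prime (by omega) (hpe ▸ hp)).2

lemma fermat_primePow' {k : ℕ} (hk : 2 ≤ k) (h : IsPrimePow (2 ^ k + 1)) :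
    k = 3 ∨ ∃ i, k = 2 ^ i := by
  obtain ⟨p, e, hp, he, hpe⟩ := (isPrimePow_nat_iff _).mp h
  have hodd : Odd (2 ^ k + 1) :=
    Even.add_one (Nat.even_pow.mpr ⟨even_two, by omega⟩)
  have hpodd : Odd p := by
    rcases hp.eq_two_or_odd' with rfl | h2
    · exfalso
      have : (2:ℕ) ∣ 2 ^ k + 1 := hpe ▸ dvd_pow_self 2 he.ne'
      rw [Nat.odd_iff] at hodd
      omega
    · exact h2
  have hp1 : 1 ≤ p ^ e := Nat.one_le_pow _ _ hp.pos
  have hsub : p ^ e - 1 = 2 ^ k := by omega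
  have hp3 : 3 ≤ p :=
    hp.two_le.lt_of_ne (by rintro rfl; exact (Nat.not_odd_iff_even.mpr even_two) hpodd)
  rcases Nat.even_or_odd e with hee | hee
  · left
    obtain ⟨f, hf⟩ := hee
    have hff : e = 2 * f := by omega
    subst hff
    have hf1 : 1 ≤ f := by omega
    set y := p ^ f with hy
    have hyodd : Odd y := hpodd.pow
    have hy3 : 3 ≤ y := by
      calc (3:ℕ) = 3^1 := rfl
      _ ≤ p^1 := Nat.pow_le_pow_left hp3 1
      _ ≤ p^f := Nat.pow_le_pow_right (by omega) hf1
    have hysq : y ^ 2 - 1 = 2 ^ k := by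
      rw [hy, ← pow_mul, mul_comm f 2]; exact hsub
    have hfac : (y + 1) * (y - 1) = 2 ^ k := by
      have h1 := Nat.sq_sub_sq y 1
      rw [one_pow] at h1
      rw [← h1, hysq]
    have hd1 : y - 1 ∣ 2 ^ k := ⟨y + 1, by rw [← hfac]; ring⟩
    have hd2 : y + 1 ∣ 2 ^ k := ⟨y - 1, by rw [← hfac]⟩
    obtain ⟨a, ha, hav⟩ := (Nat.dvd_prime_pow Nat.prime_two).mp hd1
    obtain ⟨b, hb, hbv⟩ := (Nat.dvd_prime_pow Nat.prime_two).mp hd2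
    have hab : 2 ^ b = 2 ^ a + 2 := by omega
    obtain ⟨ha1, hb2⟩ := two_pow_add_two' hab
    have hy3' : y = 3 := by rw [ha1] at hav; omega
    have hpd : p ∣ 3 := hy3' ▸ dvd_pow_self p (by omega : f ≠ 0)
    have hp3' : p = 3 := (Nat.prime_dvd_prime_iff_eq hp (by norm_num)).mp hpd
    have hf' : f = 1 := by
      subst hp3'
      apply Nat.pow_right_injective (by norm_num : 2 ≤ 3) (?_ : 3 ^ f = 3 ^ 1)
      rw [pow_one, ← hy, hy3']
    have h8 : 2 ^ k = 2 ^ 3 := by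
      rw [hp3', hf'] at hpe
      norm_num at hpe
      omega
    exact Nat.pow_right_injective (le_refl 2) h8
  · have he1 := odd_exp_sub' hp.two_le hpodd hee hsub
    subst he1
    rw [pow_one] at hpe
    exact Or.inr (Nat.pow_of_pow_add_prime (by norm_num) (by omega) (hpe ▸ hp))

lemma exists_odd_primeFactor' {n : ℕ} (hn : 2 ≤ n) (h : ∀ a, n ≠ 2 ^ a) :
    ∃ r, r.Prime ∧ Odd r ∧ r ∣ n := by
  obtain ⟨k, m, hm, rfl⟩ := Nat.exists_eq_two_pow_mul_odd (show n ≠ 0 by omega)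
  have hm1 : m ≠ 1 := by
    rintro rfl
    exact h k (by rw [mul_one])
  have hm0 : m ≠ 0 := by rintro rfl; omega
  refine ⟨m.minFac, Nat.minFac_prime hm1, ?_, (Nat.minFac_dvd m).trans (dvd_mul_left m _)⟩
  rcases (Nat.minFac_prime hm1).eq_two_or_odd' with h2 | hodd
  · exfalso
    have := Nat.minFac_dvd m
    rw [h2] at this
    rw [Nat.odd_iff] at hm
    omega
  · exact hodd

lemma pf_card_two {n p1 p2 a b : ℕ} (hp1 : p1.Prime) (hp2 : p2.Prime)
    (ha : a ≠ 0) (hb : b ≠ 0) (h : n = p1 ^ a * p2 ^ b) :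
    n.primeFactors.card ≤ 2 := by
  subst h
  rw [Nat.primeFactors_mul (pow_ne_zero _ hp1.pos.ne') (pow_ne_zero _ hp2.pos.ne'),
    Nat.primeFactors_pow _ ha, Nat.primeFactors_pow _ hb, hp1.primeFactors, hp2.primeFactors]
  exact (Finset.card_union_le _ _).trans (by simp)

lemma pf_card_one {n p a : ℕ} (hp : p.Prime) (ha : a ≠ 0) (h : n = p ^ a) :
    n.primeFactors.card ≤ 2 := by
  subst h
  rw [Nat.primeFactors_pow _ ha, hp.primeFactors]
  simp

end Aux

theorem primePow_sq_sub_one_two_primeFactors (q : ℕ) (hq : IsPrimePow q) :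
    (q ^ 2 - 1).primeFactors.card ≤ 2 ↔
      q ∈ ({2, 3, 4, 5, 7, 8, 9, 17} : Finset ℕ) := by
  constructor
  · intro h
    obtain ⟨p, n, hp, hn, rfl⟩ := (isPrimePow_nat_iff _).mp hq
    rcases hp.eq_two_or_odd' with rfl | hpodd
    · -- q = 2 ^ n
      rcases eq_or_lt_of_le (Nat.one_le_iff_ne_zero.mpr hn.ne') with h1 | hn2
      · rw [← h1]; decide
      · -- 2 ≤ n
        replace hn2 : 2 ≤ n := hn2
        have h4 : 4 ≤ 2 ^ n := by
          calc (4:ℕ) = 2^2 := rfl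
          _ ≤ 2^n := Nat.pow_le_pow_right (by norm_num) hn2
        have hfac : (2^n)^2 - 1 = (2^n - 1) * (2^n + 1) := by
          have h1 := Nat.sq_sub_sq (2^n) 1
          rw [one_pow] at h1
          rw [h1]; ring
        have hA0 : 2^n - 1 ≠ 0 := by omega
        have hB0 : 2^n + 1 ≠ 0 := by omega
        have hAodd : Odd (2^n - 1) :=
          Nat.Even.sub_odd (by omega) (Nat.even_pow.mpr ⟨even_two, by omega⟩) odd_one
        have hcop : Nat.Coprime (2^n - 1) (2^n + 1) := by
          have hg2 : Nat.gcd (2^n - 1) (2^n + 1) ∣ 2 := by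
            have := Nat.dvd_sub (Nat.gcd_dvd_right (2^n-1) (2^n+1)) (Nat.gcd_dvd_left (2^n-1) (2^n+1))
            rwa [show 2^n + 1 - (2^n - 1) = 2 by omega] at this
          rcases (Nat.dvd_prime Nat.prime_two).mp hg2 with h1 | h1
          · exact h1
          · exfalso
            have := Nat.gcd_dvd_left (2^n-1) (2^n+1)
            rw [h1] at this
            rw [Nat.odd_iff] at hAodd
            omega
        rw [hfac, Nat.primeFactors_mul hA0 hB0,
          Finset.card_union_of_disjoint hcop.disjoint_primeFactors] at h
        have hA1 : 1 ≤ (2^n - 1).primeFactors.card :=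
          Finset.card_pos.mpr (Nat.nonempty_primeFactors.mpr (by omega))
        have hB1 : 1 ≤ (2^n + 1).primeFactors.card :=
          Finset.card_pos.mpr (Nat.nonempty_primeFactors.mpr (by omega))
        have hppA : IsPrimePow (2^n - 1) :=
          isPrimePow_iff_card_primeFactors_eq_one.mpr (by omega)
        have hppB : IsPrimePow (2^n + 1) :=
          isPrimePow_iff_card_primeFactors_eq_one.mpr (by omega)
        have hnp : n.Prime := mersenne_primePow' hn2 hppA
        rcases fermat_primePow' hn2 hppB with h3 | ⟨i, hi⟩
        · subst h3; decide
        · have hi0 : i ≠ 0 := by rintro rfl; rw [pow_zero] at hi; omega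
          have h2d : 2 ∣ n := hi ▸ dvd_pow_self 2 hi0
          have : n = 2 := ((Nat.Prime.eq_one_or_self_of_dvd hnp 2 h2d).resolve_left (by norm_num)).symm
          subst this; decide
    · -- p odd
      set Q := p ^ n with hQdef
      have hp3 : 3 ≤ p :=
        hp.two_le.lt_of_ne (by rintro rfl; exact (Nat.not_odd_iff_even.mpr even_two) hpodd)
      have hQ3 : 3 ≤ Q := by
        calc (3:ℕ) = 3^1 := rfl
        _ ≤ p^1 := Nat.pow_le_pow_left hp3 1
        _ ≤ p^n := Nat.pow_le_pow_right (by omega) hn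
      have hQodd : Odd Q := hpodd.pow
      have hQsq : 9 ≤ Q^2 := by
        calc (9:ℕ) = 3^2 := rfl
        _ ≤ Q^2 := Nat.pow_le_pow_left hQ3 2
      have hQE : Even (Q^2 - 1) := Nat.Odd.sub_odd (hQodd.pow) odd_one
      have h2mem : 2 ∈ (Q^2 - 1).primeFactors :=
        Nat.mem_primeFactors.mpr ⟨Nat.prime_two, hQE.two_dvd, by omega⟩
      have hfac : Q^2 - 1 = (Q - 1) * (Q + 1) := by
        have h1 := Nat.sq_sub_sq Q 1
        rw [one_pow] at h1
        rw [h1]; ring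
      have hdv1 : Q - 1 ∣ Q^2 - 1 := hfac ▸ dvd_mul_right _ _
      have hdv2 : Q + 1 ∣ Q^2 - 1 := hfac ▸ dvd_mul_left _ _
      have hpp : IsPrimePow Q := (isPrimePow_nat_iff _).mpr ⟨p, n, hp, hn, rfl⟩
      have hclaim : ∃ a, Q - 1 = 2^a ∨ Q + 1 = 2^a := by
        by_contra hcon
        push_neg at hcon
        obtain ⟨r1, hr1p, hr1o, hr1d⟩ :=
          exists_odd_primeFactor' (by omega) (fun a => (hcon a).1)
        obtain ⟨r2, hr2p, hr2o, hr2d⟩ :=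
          exists_odd_primeFactor' (by omega) (fun a => (hcon a).2)
        have hr12' : r1 ≠ 2 := by rw [Nat.odd_iff] at hr1o; omega
        have hr22' : r2 ≠ 2 := by rw [Nat.odd_iff] at hr2o; omega
        have hne12 : r1 ≠ r2 := by
          rintro rfl
          have hdd : r1 ∣ 2 := by
            have := Nat.dvd_sub hr2d hr1d
            rwa [show Q + 1 - (Q - 1) = 2 by omega] at this
          exact hr12' ((Nat.prime_dvd_prime_iff_eq hr1p Nat.prime_two).mp hdd)
        have hsub3 : ({2, r1, r2} : Finset ℕ) ⊆ (Q^2 - 1).primeFactors := by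
          intro x hx
          simp only [Finset.mem_insert, Finset.mem_singleton] at hx
          rcases hx with rfl | rfl | rfl
          · exact h2mem
          · exact Nat.mem_primeFactors.mpr ⟨hr1p, hr1d.trans hdv1, by omega⟩
          · exact Nat.mem_primeFactors.mpr ⟨hr2p, hr2d.trans hdv2, by omega⟩
        have hcard3 : ({2, r1, r2} : Finset ℕ).card = 3 := by
          rw [Finset.card_insert_of_notMem (by simp [Ne.symm hr12', Ne.symm hr22']),
            Finset.card_insert_of_notMem (by simp [hne12]), Finset.card_singleton]
        have := Finset.card_le_card hsub3
        rw [hcard3] at this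
        omega
      obtain ⟨a, hQa | hQa⟩ := hclaim
      · -- Q = 2^a + 1, Fermat side
        have ha1 : 1 ≤ a := by
          by_contra hc
          push_neg at hc
          interval_cases a <;> omega
        rcases eq_or_lt_of_le ha1 with h1 | ha2
        · -- a = 1, Q = 3
          have : Q = 3 := by rw [← h1] at hQa; omega
          rw [this]; decide
        · replace ha2 : 2 ≤ a := ha2
          have hQv : 2^a + 1 = Q := by omega
          rcases fermat_primePow' ha2 (hQv ▸ hpp) with ha3 | ⟨i, hi⟩
          · -- a = 3, Q = 9
            subst ha3
            have : Q = 9 := by omega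
            rw [this]; decide
          · rcases eq_or_lt_of_le ha2 with h2 | ha3
            · -- a = 2, Q = 5
              have : Q = 5 := by rw [← h2] at hQa; norm_num at hQa; omega
              rw [this]; decide
            · replace ha3 : 3 ≤ a := ha3
              -- N = 2^(a-1) + 1
              have hpow : 4 ≤ 2^(a-1) := by
                calc (4:ℕ) = 2^2 := rfl
                _ ≤ 2^(a-1) := Nat.pow_le_pow_right (by norm_num) (by omega)
              have h2a : 2^a = 2 * 2^(a-1) := by
                rw [← pow_succ']
                congr 1
                omega
              have hNd : 2^(a-1) + 1 ∣ Q + 1 := ⟨2, by omega⟩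
              have hNdQ : 2^(a-1) + 1 ∣ Q^2 - 1 := hNd.trans hdv2
              have hNodd : Odd (2^(a-1) + 1) :=
                Even.add_one (Nat.even_pow.mpr ⟨even_two, by omega⟩)
              have h2nN : 2 ∉ (2^(a-1) + 1).primeFactors := by
                intro hx
                have := (Nat.mem_primeFactors.mp hx).2.1
                rw [Nat.odd_iff] at hNodd
                omega
              have hsubN : insert 2 (2^(a-1) + 1).primeFactors ⊆ (Q^2 - 1).primeFactors := by
                intro x hx
                rcases Finset.mem_insert.mp hx with rfl | hx
                · exact h2mem
                · obtain ⟨hxp, hxd, -⟩ := Nat.mem_primeFactors.mp hx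
                  exact Nat.mem_primeFactors.mpr ⟨hxp, hxd.trans hNdQ, by omega⟩
              have hcardN : (2^(a-1) + 1).primeFactors.card ≤ 1 := by
                have hcc := Finset.card_le_card hsubN
                rw [Finset.card_insert_of_notMem h2nN] at hcc
                omega
              have hN1 : 1 ≤ (2^(a-1) + 1).primeFactors.card :=
                Finset.card_pos.mpr (Nat.nonempty_primeFactors.mpr (by omega))
              have hppN : IsPrimePow (2^(a-1) + 1) :=
                isPrimePow_iff_card_primeFactors_eq_one.mpr (by omega)
              rcases fermat_primePow' (by omega) hppN with ha13 | ⟨j, hj⟩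
              · -- a - 1 = 3, a = 4, Q = 17
                have : Q = 17 := by
                  have ha4 : a = 4 := by omega
                  subst ha4
                  norm_num at hQa
                  omega
                rw [this]; decide
              · -- contradiction: a = 2^i and a - 1 = 2^j
                exfalso
                have hi0 : i ≠ 0 := by rintro rfl; rw [pow_zero] at hi; omega
                have h2di : (2:ℕ) ∣ 2^i := dvd_pow_self 2 hi0
                rcases Nat.eq_zero_or_pos j with rfl | hj1
                · rw [pow_zero] at hj; omega
                · have h2dj : (2:ℕ) ∣ 2^j := dvd_pow_self 2 (by omega)
                  omega
      · -- Q = 2^a - 1, Mersenne side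
        have ha2 : 2 ≤ a := by
          by_contra hc
          push_neg at hc
          interval_cases a <;> omega
        have hQv : 2^a - 1 = Q := by omega
        have hap : a.Prime := mersenne_primePow' ha2 (hQv ▸ hpp)
        rcases eq_or_lt_of_le ha2 with h2 | ha3
        · -- a = 2, Q = 3
          have : Q = 3 := by rw [← h2] at hQa; norm_num at hQa; omega
          rw [this]; decide
        · replace ha3 : 3 ≤ a := ha3
          have hpow : 4 ≤ 2^(a-1) := by
            calc (4:ℕ) = 2^2 := rfl
            _ ≤ 2^(a-1) := Nat.pow_le_pow_right (by norm_num) (by omega)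
          have h2a : 2^a = 2 * 2^(a-1) := by
            rw [← pow_succ']
            congr 1
            omega
          have hMd : 2^(a-1) - 1 ∣ Q - 1 := ⟨2, by omega⟩
          have hMdQ : 2^(a-1) - 1 ∣ Q^2 - 1 := hMd.trans hdv1
          have hModd : Odd (2^(a-1) - 1) :=
            Nat.Even.sub_odd (by omega) (Nat.even_pow.mpr ⟨even_two, by omega⟩) odd_one
          have h2nM : 2 ∉ (2^(a-1) - 1).primeFactors := by
            intro hx
            have := (Nat.mem_primeFactors.mp hx).2.1
            rw [Nat.odd_iff] at hModd
            omega
          have hsubM : insert 2 (2^(a-1) - 1).primeFactors ⊆ (Q^2 - 1).primeFactors := by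
            intro x hx
            rcases Finset.mem_insert.mp hx with rfl | hx
            · exact h2mem
            · obtain ⟨hxp, hxd, -⟩ := Nat.mem_primeFactors.mp hx
              exact Nat.mem_primeFactors.mpr ⟨hxp, hxd.trans hMdQ, by omega⟩
          have hcardM : (2^(a-1) - 1).primeFactors.card ≤ 1 := by
            have hcc := Finset.card_le_card hsubM
            rw [Finset.card_insert_of_notMem h2nM] at hcc
            omega
          have hM1 : 1 ≤ (2^(a-1) - 1).primeFactors.card :=
            Finset.card_pos.mpr (Nat.nonempty_primeFactors.mpr (by omega))
          have hppM : IsPrimePow (2^(a-1) - 1) :=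
            isPrimePow_iff_card_primeFactors_eq_one.mpr (by omega)
          have ha1p : (a-1).Prime := mersenne_primePow' (by omega) hppM
          rcases ha1p.eq_two_or_odd' with h2' | hodd'
          · -- a = 3, Q = 7
            have ha3' : a = 3 := by omega
            subst ha3'
            have : Q = 7 := by norm_num at hQa; omega
            rw [this]; decide
          · exfalso
            have haE : Even a := by
              rw [Nat.even_iff]
              rw [Nat.odd_iff] at hodd'
              omega
            have := (Nat.Prime.even_iff hap).mp haE
            omega
  · intro h
    fin_cases h
    · rw [show (2:ℕ)^2 - 1 = 3 by norm_num, (by norm_num : Nat.Prime 3).primeFactors]; simp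
    · exact pf_card_one Nat.prime_two (by norm_num) (by norm_num : (3:ℕ)^2 - 1 = 2^3)
    · exact pf_card_two (by norm_num : Nat.Prime 3) (by norm_num : Nat.Prime 5)
        (by norm_num) (by norm_num) (by norm_num : (4:ℕ)^2 - 1 = 3^1 * 5^1)
    · exact pf_card_two Nat.prime_two (by norm_num : Nat.Prime 3)
        (by norm_num) (by norm_num) (by norm_num : (5:ℕ)^2 - 1 = 2^3 * 3^1)
    · exact pf_card_two Nat.prime_two (by norm_num : Nat.Prime 3)
        (by norm_num) (by norm_num) (by norm_num : (7:ℕ)^2 - 1 = 2^4 * 3^1)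
    · exact pf_card_two (by norm_num : Nat.Prime 3) (by norm_num : Nat.Prime 7)
        (by norm_num) (by norm_num) (by norm_num : (8:ℕ)^2 - 1 = 3^2 * 7^1)
    · exact pf_card_two Nat.prime_two (by norm_num : Nat.Prime 5)
        (by norm_num) (by norm_num) (by norm_num : (9:ℕ)^2 - 1 = 2^4 * 5^1)
    · exact pf_card_two Nat.prime_two (by norm_num : Nat.Prime 3)
        (by norm_num) (by norm_num) (by norm_num : (17:ℕ)^2 - 1 = 2^5 * 3^2)
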